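/- Let n ≥ 1, let g_1,…,g_n : ℝ → ℝ be continuous, let x_1 ≤ x_2 ≤ … ≤ x_{n+1} be real numbers, and set G_i(t) = ∫_{x_1}^t g_i(s) ds. Then ∫_{W^{n,n+1}(x)} det( g_i(y_j) )_{i,j=1}^n dy_1⋯dy_n = det A, where A is the (n+1)×(n+1) matrix with first row A_{1,j} = 1 for j = 1,…,n+1 and A_{i+1,j} = G_i(x_j) for 1 ≤ i ≤ n and 1 ≤ j ≤ n+1. -/

import Mathlib

open MeasureTheory

lemma my_restrict_pi_pi {ι : Type*} [Fintype ι] (μ : ι → Measure ℝ) [∀ i, SigmaFinite (μ i)]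
    (s : ι → Set ℝ) (hs : ∀ i, MeasurableSet (s i)) :
    (Measure.pi μ).restrict (Set.univ.pi s) = Measure.pi (fun i => (μ i).restrict (s i)) := by
  refine (Measure.pi_eq (μ := fun i => (μ i).restrict (s i)) fun t ht => ?_).symm
  rw [Measure.restrict_apply (MeasurableSet.univ_pi ht), ← Set.pi_inter_distrib, Measure.pi_pi]
  exact Finset.prod_congr rfl fun i _ => (Measure.restrict_apply (ht i)).symm

lemma my_integrable_pi_prod {n : ℕ} (μ : Fin n → Measure ℝ) [∀ i, SigmaFinite (μ i)]
    (f : Fin n → ℝ → ℝ) (hf : ∀ i, Integrable (f i) (μ i)) :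
    Integrable (fun x : Fin n → ℝ => ∏ i, f i (x i)) (Measure.pi μ) := by
  induction n with
  | zero => simp only [Finset.univ_eq_empty, Finset.prod_empty,
      integrable_const_iff, one_ne_zero, isFiniteMeasure_iff, Measure.pi_univ, ENNReal.one_lt_top, or_true,
      Finset.prod_const]
  | succ n n_ih =>
      have := ((measurePreserving_piFinSuccAbove μ 0).symm)
      rw [← this.integrable_comp_emb (MeasurableEquiv.measurableEmbedding _)]
      simp_rw [MeasurableEquiv.piFinSuccAbove_symm_apply, Fin.insertNthEquiv,
        Fin.prod_univ_succ, Fin.insertNth_zero]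
      simp only [Fin.zero_succAbove, Function.comp_def, Fin.cons_zero, Fin.cons_succ,
        Equiv.coe_fn_mk]
      exact Integrable.mul_prod (hf 0) (n_ih _ _ (fun i => hf _))

lemma my_integral_pi_prod {n : ℕ} (μ : Fin n → Measure ℝ) [∀ i, SigmaFinite (μ i)]
    (f : Fin n → ℝ → ℝ) :
    ∫ x : Fin n → ℝ, ∏ i, f i (x i) ∂Measure.pi μ = ∏ i, ∫ x, f i x ∂μ i := by
  induction n with
  | zero =>
      simp only [Finset.univ_eq_empty, Finset.prod_empty, integral_const, measureReal_def, Measure.pi_univ,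
        ENNReal.toReal_one, smul_eq_mul, mul_one, Finset.prod_const, pow_zero, one_smul]
  | succ n n_ih =>
      calc
        _ = ∫ p : ℝ × (Fin n → ℝ),
            f 0 p.1 * ∏ i : Fin n, f (Fin.succ i) (p.2 i)
            ∂(μ 0).prod (Measure.pi fun i => μ (Fin.succ i)) := by
          rw [← ((measurePreserving_piFinSuccAbove μ 0).symm).integral_comp']
          simp_rw [MeasurableEquiv.piFinSuccAbove_symm_apply, Fin.insertNthEquiv,
            Fin.prod_univ_succ, Fin.insertNth_zero, Equiv.coe_fn_mk, Fin.cons_succ, cast_eq,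
            Fin.zero_succAbove, Fin.cons_zero]
        _ = (∫ y, f 0 y ∂μ 0) * ∏ i : Fin n, ∫ y, f (Fin.succ i) y ∂μ (Fin.succ i) := by
          rw [← n_ih _ _, ← integral_prod_mul]
        _ = ∏ i, ∫ y, f i y ∂μ i := by rw [Fin.prod_univ_succ]

lemma my_integral_det_pi {n : ℕ} (μ : Fin n → Measure ℝ) [∀ i, SigmaFinite (μ i)]
    (g : Fin n → ℝ → ℝ) (hint : ∀ i j, Integrable (g i) (μ j)) :
    ∫ y, Matrix.det (Matrix.of fun i j => g i (y j)) ∂Measure.pi μ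
      = Matrix.det (Matrix.of fun i j => ∫ s, g i s ∂μ j) := by
  simp_rw [Matrix.det_apply, Matrix.of_apply, Units.smul_def, zsmul_eq_mul]
  rw [integral_finset_sum _ fun σ _ =>
    (my_integrable_pi_prod μ (fun j => g (σ j)) (fun j => hint _ _)).const_mul _]
  refine Finset.sum_congr rfl fun σ _ => ?_
  rw [integral_const_mul, my_integral_pi_prod]

/-- Integration of a determinant over the interlacing region `W^{n,n+1}(x)`:
`∫_{W^{n,n+1}(x)} det(g_i(y_j))_{i,j=1}^n dy = det A`, where `A` is the `(n+1)×(n+1)` matrix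
whose first row is all ones and whose remaining rows are `A_{i+1,j} = G_i(x_j)` with
`G_i(t) = ∫_{x_1}^t g_i(s) ds`. -/
theorem integral_det_over_interlacing_region (n : ℕ) (hn : 1 ≤ n)
    (g : Fin n → ℝ → ℝ) (hg : ∀ i, Continuous (g i))
    (x : Fin (n + 1) → ℝ) (hx : Monotone x) :
    ∫ y in Set.univ.pi (fun j : Fin n => Set.Icc (x j.castSucc) (x j.succ)),
        Matrix.det (Matrix.of fun i j : Fin n => g i (y j))
      = Matrix.det (Matrix.of fun i j : Fin (n + 1) =>
          Fin.cases (motive := fun _ => ℝ) 1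
            (fun i' : Fin n => ∫ s in (x 0)..(x j), g i' s) i) := by
  obtain ⟨m, rfl⟩ : ∃ m, n = m + 1 := ⟨n - 1, (Nat.succ_pred_eq_of_pos hn).symm⟩
  have hle : ∀ j : Fin (m + 1), x j.castSucc ≤ x j.succ :=
    fun j => hx (Fin.castSucc_le_succ j)
  have hrestrict : (volume : Measure (Fin (m + 1) → ℝ)).restrict
      (Set.univ.pi fun j => Set.Icc (x j.castSucc) (x j.succ))
      = Measure.pi (fun j => volume.restrict (Set.Icc (x j.castSucc) (x j.succ))) := by
    rw [MeasureTheory.volume_pi, my_restrict_pi_pi _ _ (fun j => measurableSet_Icc)]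
  rw [hrestrict, my_integral_det_pi _ g (fun i j => (hg i).integrableOn_Icc)]
  have hM : (Matrix.of fun i j : Fin (m + 1) =>
        ∫ s, g i s ∂(volume.restrict (Set.Icc (x j.castSucc) (x j.succ))))
      = Matrix.of fun i j : Fin (m + 1) => ∫ s in (x j.castSucc)..(x j.succ), g i s := by
    ext i j
    rw [Matrix.of_apply, Matrix.of_apply,
      intervalIntegral.integral_of_le (hle j), ← MeasureTheory.integral_Icc_eq_integral_Ioc]
  rw [hM]
  -- determinant identity
  have hbig := Matrix.det_succ_column_zero (Matrix.of fun i j : Fin (m + 1 + 1) =>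
          Fin.cases (motive := fun _ => ℝ) 1
            (fun i' : Fin (m + 1) => ∫ s in (x 0)..(x j), g i' s) i)
  rw [Fin.sum_univ_succ] at hbig
  simp only [Matrix.of_apply, Fin.cases_zero, Fin.cases_succ, intervalIntegral.integral_same,
    mul_zero, zero_mul, mul_one, Finset.sum_const_zero, add_zero, Fin.val_zero, pow_zero,
    one_mul] at hbig
  rw [hbig]
  refine (Matrix.det_eq_of_forall_col_eq_smul_add_pred (fun _ => (1 : ℝ)) ?_ ?_).symm
  · intro i
    simp [Fin.succAbove_zero]
  · intro i j
    simp only [Matrix.submatrix_apply, Fin.succAbove_zero, Matrix.of_apply, Fin.cases_succ,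
      one_mul]
    have h1 : IntervalIntegrable (g i) volume (x 0) (x j.succ.castSucc) :=
      (hg i).intervalIntegrable _ _
    have h2 : IntervalIntegrable (g i) volume (x j.succ.castSucc) (x j.succ.succ) :=
      (hg i).intervalIntegrable _ _
    rw [← intervalIntegral.integral_add_adjacent_intervals h1 h2, Fin.succ_castSucc]
    ring
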